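/- Let 𝒫 = {(n_i), (H_i), (I_i), (u_i)}_{i∈[k]} be a partial clustering and let x ∈ R be such that Dom(x) ⊆ I_i for every i ∈ [k]. Let j ∈ [k] be an index such that f_2(x, u_j) is minimal among the values f_2(x, u_i), i ∈ [k]. Then the tuple obtained from 𝒫 by replacing H_j with H_j ∪ {x} is again a partial clustering, and its value OPT equals OPT(𝒫). -/
import Mathlib


open Finset

namespace KMD

/-- A point in `ℍ^d`: each coordinate is either a real number or missing (`none`). -/
abbrev HPt (d : ℕ) := Fin d → Option ℝ

variable {d : ℕ}

/-- The domain of a point: the set of coordinates where it is specified. -/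
noncomputable def Dom (x : HPt d) : Finset (Fin d) := Finset.univ.filter fun i => x i ≠ none

/-- The number of missing coordinates of a point. -/
noncomputable def numMissing (x : HPt d) : ℕ := (Finset.univ.filter fun i => x i = none).card

/-- A `Δ`-point: at most `Δ` coordinates are missing. -/
def IsDeltaPt (Δ : ℕ) (x : HPt d) : Prop := numMissing x ≤ Δ

/-- `(a - b)^2`, with the convention that it is `0` when either entry is missing. -/
def coordSq : Option ℝ → Option ℝ → ℝ
  | some a, some b => (a - b) ^ 2
  | _, _ => 0

/-- `d^I(x,y)`. -/
noncomputable def dI (I : Finset (Fin d)) (x y : HPt d) : ℝ :=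
  Real.sqrt (∑ i ∈ I, coordSq (x i) (y i))

/-- `d(x,y) = d^{[d]}(x,y)`. -/
noncomputable def dH (x y : HPt d) : ℝ := dI Finset.univ x y

/-- `PD(S, I)`: points of `S` partially defined on `I`. -/
noncomputable def PD (S : Finset (HPt d)) (I : Finset (Fin d)) : Finset (HPt d) :=
  S.filter fun x => (Dom x ∩ I).Nonempty

/-- `FD(S, I)`: points of `S` fully defined on `I`. -/
noncomputable def FD (S : Finset (HPt d)) (I : Finset (Fin d)) : Finset (HPt d) :=
  S.filter fun x => Dom x ⊆ I

/-- The mean `c^I(P)` of `P` on the coordinates of `I` (unspecified outside `I`). -/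
noncomputable def cI (I : Finset (Fin d)) (P : Finset (HPt d)) : HPt d := fun i =>
  if i ∈ I ∧ (PD P {i}).Nonempty then
    some ((∑ x ∈ PD P {i}, (x i).getD 0) / (PD P {i}).card)
  else none

/-- `c(P) = c^{[d]}(P)`. -/
noncomputable def cP (P : Finset (HPt d)) : HPt d := cI Finset.univ P

/-- `f^I_2(X, y) = Σ_{x ∈ X} d^I(x,y)^2`. -/
noncomputable def f2I (I : Finset (Fin d)) (X : Finset (HPt d)) (y : HPt d) : ℝ :=
  ∑ x ∈ X, dI I x y ^ 2

/-- `f_2 = f^{[d]}_2`. -/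
noncomputable def f2 (X : Finset (HPt d)) (y : HPt d) : ℝ := f2I Finset.univ X y

/-- A partial clustering of the instance `P` of `Δ`-points, with `k` clusters. -/
structure PartialClustering (d Δ k : ℕ) (P : Finset (HPt d)) where
  n : Fin k → ℕ
  H : Fin k → Finset (HPt d)
  I : Fin k → Finset (Fin d)
  u : Fin k → HPt d
  H_sub : ∀ i, H i ⊆ P
  n_le : ∀ i, n i ≤ Δ + 1
  dom_u : ∀ i, Dom (u i) = I i
  I_card : ∀ i, 0 < n i → d - Δ + (n i - 1) ≤ (I i).card
  I_empty : ∀ i, n i = 0 → I i = ∅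
  H_empty : ∀ i, n i = 0 → H i = ∅

variable {Δ k : ℕ} {P : Finset (HPt d)}

/-- `R = P − ∪_i H_i`: the points not yet assigned to a cluster. -/
noncomputable def Rset (pc : PartialClustering d Δ k P) : Finset (HPt d) :=
  P \ Finset.univ.biUnion pc.H

/-- An extension of a partial clustering: a partition `(Q i)` of `P` with `H i ⊆ Q i`. -/
def IsExtension (pc : PartialClustering d Δ k P) (Q : Fin k → Finset (HPt d)) : Prop :=
  (∀ i, pc.H i ⊆ Q i) ∧ (∀ i, Q i ⊆ P) ∧
    (∀ i j, i ≠ j → Disjoint (Q i) (Q j)) ∧ ∀ x ∈ P, ∃ i, x ∈ Q i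

/-- The centers associated with an extension: `c'_i` agrees with `u i` on `I i`
and with the mean of `Q i` outside `I i`. -/
noncomputable def centers (pc : PartialClustering d Δ k P)
    (Q : Fin k → Finset (HPt d)) (i : Fin k) : HPt d :=
  fun r => if r ∈ pc.I i then pc.u i r else cP (Q i) r

/-- The value of an extension. -/
noncomputable def extVal (pc : PartialClustering d Δ k P)
    (Q : Fin k → Finset (HPt d)) : ℝ :=
  ∑ i, f2 (Q i) (centers pc Q i)

/-- `OPT(pc)`: the minimum value over all extensions of `pc`. -/
noncomputable def OPT (pc : PartialClustering d Δ k P) : ℝ :=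
  sInf (extVal pc '' {Q | IsExtension pc Q})

/-- An optimal extension. -/
def IsOptimalExtension (pc : PartialClustering d Δ k P)
    (Q : Fin k → Finset (HPt d)) : Prop :=
  IsExtension pc Q ∧ ∀ Q', IsExtension pc Q' → extVal pc Q ≤ extVal pc Q'

/-- A safe extension. -/
def IsSafe (pc : PartialClustering d Δ k P) (Q : Fin k → Finset (HPt d)) : Prop :=
  ∀ x ∈ Rset pc, ∀ i j : Fin k, Dom x ⊆ pc.I i → Dom x ⊆ pc.I j → x ∈ Q i →
    dH x (centers pc Q i) ≤ dH x (centers pc Q j)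

/-- `Z` is a `t`-useless set of coordinates for the pair `(i,j)` and extension `Q`.
For pairs with `I i = ∅` or `I j ≠ ∅` it is by definition the empty set. -/
def IsUseless (pc : PartialClustering d Δ k P) (Q : Fin k → Finset (HPt d))
    (t : ℝ) (i j : Fin k) (Z : Finset (Fin d)) : Prop :=
  Z ⊆ pc.I i ∧
  (((pc.I i).Nonempty ∧ pc.I j = ∅) →
    (Z = ∅ ∨ d - Δ ≤ Z.card) ∧
    f2I Z (Q j ∩ Rset pc) (pc.u i) - f2I Z (Q j ∩ Rset pc) (centers pc Q j)
      ≤ t * OPT pc) ∧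
  (¬ ((pc.I i).Nonempty ∧ pc.I j = ∅) → Z = ∅)

/-- `Z` is compatible with the extension `Q` (for the pair `(i,j)`). -/
def Compatible (pc : PartialClustering d Δ k P) (Q : Fin k → Finset (HPt d))
    (i j : Fin k) (Z : Finset (Fin d)) : Prop :=
  (∀ x ∈ Q j, ¬ Dom x ⊆ pc.I j → ¬ Dom x ⊆ Z) ∧
  (∀ x ∈ Q j, Dom x ⊆ pc.I i → ¬ dH x (pc.u i) < dH x (centers pc Q j) / 2)

open scoped Classical in
/-- The elements of `FD(S, I)` at distance at most `ρ` from `u`. -/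
noncomputable def ballFD (S : Finset (HPt d)) (I : Finset (Fin d))
    (u : HPt d) (ρ : ℝ) : Finset (HPt d) :=
  (FD S I).filter fun x => dH x u ≤ ρ


section Aux

variable {d Δ k : ℕ} {P : Finset (HPt d)}

lemma coordSq_nonneg (a b : Option ℝ) : 0 ≤ coordSq a b := by
  cases a <;> cases b <;> simp [coordSq] <;> positivity

lemma coordSq_none (b : Option ℝ) : coordSq none b = 0 := by cases b <;> rfl

lemma dI_sq (I : Finset (Fin d)) (x y : HPt d) :
    dI I x y ^ 2 = ∑ i ∈ I, coordSq (x i) (y i) := by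
  rw [dI, Real.sq_sqrt]
  exact Finset.sum_nonneg fun i _ => coordSq_nonneg _ _

lemma f2_singleton (x y : HPt d) : f2 {x} y = ∑ r, coordSq (x r) (y r) := by
  simp [f2, f2I, dI_sq]

lemma f2_nonneg (X : Finset (HPt d)) (y : HPt d) : 0 ≤ f2 X y :=
  Finset.sum_nonneg fun _ _ => sq_nonneg _

lemma extVal_nonneg (pc : PartialClustering d Δ k P) (Q : Fin k → Finset (HPt d)) :
    0 ≤ extVal pc Q :=
  Finset.sum_nonneg fun _ _ => f2_nonneg _ _

lemma mem_Dom {x : HPt d} {r : Fin d} : r ∈ Dom x ↔ x r ≠ none := by simp [Dom]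

lemma f2_singleton_centers (pc : PartialClustering d Δ k P) (Q : Fin k → Finset (HPt d))
    (i : Fin k) {x : HPt d} (hx : Dom x ⊆ pc.I i) :
    f2 {x} (centers pc Q i) = f2 {x} (pc.u i) := by
  rw [f2_singleton, f2_singleton]
  refine Finset.sum_congr rfl fun r _ => ?_
  by_cases h : x r = none
  · rw [h, coordSq_none, coordSq_none]
  · have hr : r ∈ pc.I i := hx (mem_Dom.mpr h)
    simp [centers, hr]

lemma cP_eq_of_PD_eq {S T : Finset (HPt d)} {r : Fin d}
    (h : PD S {r} = PD T {r}) : cP S r = cP T r := by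
  simp [cP, cI, h]

lemma PD_insert (S : Finset (HPt d)) (x : HPt d) {r : Fin d} (hr : r ∉ Dom x) :
    PD (insert x S) {r} = PD S {r} := by
  rw [PD, PD, Finset.filter_insert, if_neg]
  intro ⟨a, ha⟩
  rw [Finset.mem_inter, Finset.mem_singleton] at ha
  exact hr (ha.2 ▸ ha.1)

lemma PD_sdiff (S : Finset (HPt d)) (x : HPt d) {r : Fin d} (hr : r ∉ Dom x) :
    PD (S \ {x}) {r} = PD S {r} := by
  rw [PD, PD]
  ext a
  simp only [Finset.mem_filter, Finset.mem_sdiff, Finset.mem_singleton]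
  constructor
  · rintro ⟨⟨h1, _⟩, h2⟩; exact ⟨h1, h2⟩
  · rintro ⟨h1, h2⟩
    refine ⟨⟨h1, ?_⟩, h2⟩
    rintro rfl
    obtain ⟨b, hb⟩ := h2
    rw [Finset.mem_inter, Finset.mem_singleton] at hb
    exact hr (hb.2 ▸ hb.1)

lemma f2_insert {S : Finset (HPt d)} {x : HPt d} (h : x ∉ S) (y : HPt d) :
    f2 (insert x S) y = f2 S y + f2 {x} y := by
  simp [f2, f2I, Finset.sum_insert h, add_comm]

lemma f2_sdiff {S : Finset (HPt d)} {x : HPt d} (h : x ∈ S) (y : HPt d) :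
    f2 (S \ {x}) y = f2 S y - f2 {x} y := by
  have h1 : dI Finset.univ x y ^ 2 + ∑ a ∈ S.erase x, dI Finset.univ a y ^ 2
      = ∑ a ∈ S, dI Finset.univ a y ^ 2 :=
    Finset.add_sum_erase S (fun a => dI Finset.univ a y ^ 2) h
  simp only [f2, f2I, Finset.sum_singleton, ← Finset.erase_eq]
  linarith

lemma move (pc : PartialClustering d Δ k P) (x : HPt d) (hxP : x ∈ P)
    (hxH : ∀ i, x ∉ pc.H i)
    (hdom : ∀ i, Dom x ⊆ pc.I i) (j : Fin k)
    (hj : ∀ i, f2 {x} (pc.u j) ≤ f2 {x} (pc.u i))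
    (Q : Fin k → Finset (HPt d)) (hQ : IsExtension pc Q) :
    ∃ Q', IsExtension pc Q' ∧ x ∈ Q' j ∧ extVal pc Q' ≤ extVal pc Q := by
  obtain ⟨hH, hsub, hdisj, hcov⟩ := hQ
  obtain ⟨i0, hi0⟩ := hcov x hxP
  by_cases hij : i0 = j
  · exact ⟨Q, ⟨hH, hsub, hdisj, hcov⟩, hij ▸ hi0, le_refl _⟩
  set Q' : Fin k → Finset (HPt d) :=
    fun i => if i = j then insert x (Q j) else if i = i0 then Q i0 \ {x} else Q i with hQ'def
  have hxQ : ∀ i, i ≠ i0 → x ∉ Q i := fun i hi hx =>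
    Finset.disjoint_left.mp (hdisj i i0 hi) hx hi0
  have hmem : ∀ (a : HPt d) (i : Fin k),
      a ∈ Q' i ↔ (a = x ∧ i = j) ∨ (a ≠ x ∧ a ∈ Q i) := by
    intro a i
    by_cases h1 : i = j
    · subst h1
      have hxQi : x ∉ Q i := hxQ i (fun h => hij (h.symm))
      by_cases hax : a = x <;> simp [hQ'def, hax, hxQi]
    · by_cases h2 : i = i0
      · subst h2
        by_cases hax : a = x <;> simp [hQ'def, h1, hax, hij, hi0]
      · have hxQi : x ∉ Q i := hxQ i h2
        by_cases hax : a = x <;> simp [hQ'def, h1, h2, hax, hxQi]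
  have hxQ'j : x ∈ Q' j := (hmem x j).mpr (Or.inl ⟨rfl, rfl⟩)
  refine ⟨Q', ⟨?_, ?_, ?_, ?_⟩, hxQ'j, ?_⟩
  · intro i y hy
    refine (hmem y i).mpr (Or.inr ⟨?_, hH i hy⟩)
    rintro rfl; exact hxH i hy
  · intro i y hy
    rcases (hmem y i).mp hy with ⟨rfl, _⟩ | ⟨_, h⟩
    · exact hxP
    · exact hsub i h
  · intro a b hab
    rw [Finset.disjoint_left]
    intro y h1 h2
    rcases (hmem y a).mp h1 with ⟨rfl, rfl⟩ | ⟨hya, hya'⟩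
    · rcases (hmem y b).mp h2 with ⟨_, rfl⟩ | ⟨hyb, _⟩
      · exact hab rfl
      · exact hyb rfl
    · rcases (hmem y b).mp h2 with ⟨rfl, _⟩ | ⟨_, hyb'⟩
      · exact hya rfl
      · exact Finset.disjoint_left.mp (hdisj a b hab) hya' hyb'
  · intro y hyP
    by_cases hyx : y = x
    · exact ⟨j, (hmem y j).mpr (Or.inl ⟨hyx, rfl⟩)⟩
    · obtain ⟨i, hi⟩ := hcov y hyP
      exact ⟨i, (hmem y i).mpr (Or.inr ⟨hyx, hi⟩)⟩
  · -- value comparison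
    have hcent : ∀ i, centers pc Q' i = centers pc Q i := by
      intro i
      funext r
      by_cases hr : r ∈ pc.I i
      · simp [centers, hr]
      · have hrx : r ∉ Dom x := fun h => hr (hdom i h)
        simp only [centers, if_neg hr]
        apply cP_eq_of_PD_eq
        by_cases h1 : i = j
        · subst h1
          have : Q' i = insert x (Q i) := by simp [hQ'def]
          rw [this, PD_insert _ _ hrx]
        · by_cases h2 : i = i0
          · subst h2
            have : Q' i = Q i \ {x} := by simp [hQ'def, h1]
            rw [this, PD_sdiff _ _ hrx]
          · have : Q' i = Q i := by simp [hQ'def, h1, h2]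
            rw [this]
    have hsplit : ∀ i, f2 (Q' i) (centers pc Q i)
        = f2 (Q i) (centers pc Q i)
          + (if i = j then f2 {x} (centers pc Q j) else 0)
          - (if i = i0 then f2 {x} (centers pc Q i0) else 0) := by
      intro i
      by_cases h1 : i = j
      · subst h1
        have hxQi : x ∉ Q i := hxQ i (fun h => hij h.symm)
        have hQi : Q' i = insert x (Q i) := by simp [hQ'def]
        rw [hQi, f2_insert hxQi, if_pos rfl, if_neg (fun h : i = i0 => hij h.symm)]
        ring
      · by_cases h2 : i = i0
        · subst h2
          have hQi : Q' i = Q i \ {x} := by simp [hQ'def, h1]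
          rw [hQi, f2_sdiff hi0]
          simp [h1]
        · have hQi : Q' i = Q i := by simp [hQ'def, h1, h2]
          rw [hQi]
          simp [h1, h2]
    have hval : extVal pc Q' = extVal pc Q
        + f2 {x} (centers pc Q j) - f2 {x} (centers pc Q i0) := by
      unfold extVal
      calc (∑ i, f2 (Q' i) (centers pc Q' i))
          = ∑ i, f2 (Q' i) (centers pc Q i) := by
            refine Finset.sum_congr rfl fun i _ => ?_
            rw [hcent i]
        _ = ∑ i, (f2 (Q i) (centers pc Q i)
              + (if i = j then f2 {x} (centers pc Q j) else 0)
              - (if i = i0 then f2 {x} (centers pc Q i0) else 0)) := by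
            exact Finset.sum_congr rfl fun i _ => hsplit i
        _ = (∑ i, f2 (Q i) (centers pc Q i))
              + f2 {x} (centers pc Q j) - f2 {x} (centers pc Q i0) := by
            rw [Finset.sum_sub_distrib, Finset.sum_add_distrib]
            simp
    rw [hval, f2_singleton_centers pc Q j (hdom j), f2_singleton_centers pc Q i0 (hdom i0)]
    have := hj i0
    linarith

end Aux


/-- Observation 1: assigning a fully decided point of `R` to the cluster
whose partial center is nearest yields a partial clustering with the same value. -/
theorem stmt_3 {d Δ k : ℕ} (hd : 1 ≤ d) (hΔ : Δ < d) (hk : 1 ≤ k)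
    {P : Finset (HPt d)} (hP : ∀ y ∈ P, IsDeltaPt Δ y ∧ (Dom y).Nonempty)
    (pc : PartialClustering d Δ k P) (x : HPt d) (hxR : x ∈ Rset pc)
    (hdom : ∀ i : Fin k, Dom x ⊆ pc.I i) (j : Fin k)
    (hj : ∀ i : Fin k, f2 {x} (pc.u j) ≤ f2 {x} (pc.u i)) :
    ∃ pc' : PartialClustering d Δ k P,
      pc'.n = pc.n ∧ pc'.I = pc.I ∧ pc'.u = pc.u ∧
      pc'.H = Function.update pc.H j (insert x (pc.H j)) ∧
      OPT pc' = OPT pc := by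
  classical
  have hxP : x ∈ P := (Finset.mem_sdiff.mp hxR).1
  have hxH : ∀ i, x ∉ pc.H i := by
    intro i hxi
    exact (Finset.mem_sdiff.mp hxR).2
      (Finset.mem_biUnion.mpr ⟨i, Finset.mem_univ i, hxi⟩)
  have hdomx : (Dom x).Nonempty := (hP x hxP).2
  have hHsub : ∀ i, Function.update pc.H j (insert x (pc.H j)) i ⊆ P := by
    intro i
    by_cases h : i = j
    · subst h
      rw [Function.update_self]
      exact Finset.insert_subset hxP (pc.H_sub i)
    · rw [Function.update_of_ne h]
      exact pc.H_sub i
  have hHemp : ∀ i, pc.n i = 0 → Function.update pc.H j (insert x (pc.H j)) i = ∅ := by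
    intro i hni
    by_cases h : i = j
    · subst h
      exfalso
      have hIe := pc.I_empty i hni
      obtain ⟨r, hr⟩ := hdomx
      have hri := hdom i hr
      rw [hIe] at hri
      exact absurd hri (Finset.notMem_empty r)
    · rw [Function.update_of_ne h]
      exact pc.H_empty i hni
  set pc' : PartialClustering d Δ k P :=
    ⟨pc.n, Function.update pc.H j (insert x (pc.H j)), pc.I, pc.u,
      hHsub, pc.n_le, pc.dom_u, pc.I_card, pc.I_empty, hHemp⟩ with hpc'
  refine ⟨pc', rfl, rfl, rfl, rfl, ?_⟩
  have hval : extVal pc' = extVal pc := rfl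
  have hext1 : ∀ Q, IsExtension pc' Q → IsExtension pc Q := by
    rintro Q ⟨h1, h2, h3, h4⟩
    refine ⟨fun i => ?_, h2, h3, h4⟩
    have hi : Function.update pc.H j (insert x (pc.H j)) i ⊆ Q i := h1 i
    by_cases h : i = j
    · subst h
      rw [Function.update_self] at hi
      exact (Finset.subset_insert _ _).trans hi
    · rwa [Function.update_of_ne h] at hi
  have hext2 : ∀ Q, IsExtension pc Q → x ∈ Q j → IsExtension pc' Q := by
    rintro Q ⟨h1, h2, h3, h4⟩ hxQ
    refine ⟨fun i => ?_, h2, h3, h4⟩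
    by_cases h : i = j
    · subst h
      show Function.update pc.H i (insert x (pc.H i)) i ⊆ Q i
      rw [Function.update_self]
      exact Finset.insert_subset hxQ (h1 i)
    · show Function.update pc.H j (insert x (pc.H j)) i ⊆ Q i
      rw [Function.update_of_ne h]
      exact h1 i
  have hbdd : ∀ (q : PartialClustering d Δ k P),
      BddBelow (extVal q '' {Q | IsExtension q Q}) := by
    intro q
    refine ⟨0, ?_⟩
    rintro b ⟨Q, _, rfl⟩
    exact extVal_nonneg q Q
  unfold OPT
  rw [hval]
  by_cases hne : ∃ Q, IsExtension pc Q
  · obtain ⟨Q0, hQ0⟩ := hne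
    obtain ⟨Q1, hQ1, hxQ1, _⟩ := move pc x hxP hxH hdom j hj Q0 hQ0
    apply le_antisymm
    · refine le_csInf ⟨extVal pc Q0, Q0, hQ0, rfl⟩ ?_
      rintro b ⟨Q, hQ, rfl⟩
      obtain ⟨Q', hQ', hxQ', hle⟩ := move pc x hxP hxH hdom j hj Q hQ
      refine le_trans (csInf_le ?_ ⟨Q', hext2 Q' hQ' hxQ', rfl⟩) hle
      have := hbdd pc'
      rwa [hval] at this
    · refine csInf_le_csInf (hbdd pc) ⟨extVal pc Q1, Q1, hext2 Q1 hQ1 hxQ1, rfl⟩ ?_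
      rintro b ⟨Q, hQ, rfl⟩
      exact ⟨Q, hext1 Q hQ, rfl⟩
  · have h1 : {Q | IsExtension pc Q} = ∅ := by
      ext Q; simp only [Set.mem_setOf_eq, Set.mem_empty_iff_false, iff_false]
      exact fun h => hne ⟨Q, h⟩
    have h2 : {Q | IsExtension pc' Q} = ∅ := by
      ext Q; simp only [Set.mem_setOf_eq, Set.mem_empty_iff_false, iff_false]
      exact fun h => hne ⟨Q, hext1 Q h⟩
    rw [h1, h2]


end KMD
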